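/- Let N ≥ 1, let λ be a nonzero complex number that is not a negative real with principal argument θ = arg λ ∈ (−π, π), let J be an N×N complex matrix, let m ≥ 1, let A₁, …, A_m be N×N complex Hermitian matrices, and let η₁, …, η_m ∈ {0,1} with k = η₁ + ⋯ + η_m. Then |Tr[ ∏_{j=1}^{m} (I − i·√(λ/N)·A_j)⁻¹ (JJ†)^{η_j} ]| ≤ N · ‖JJ†‖^k / (cos(θ/2))^m, where the product of matrices is taken in the order j = 1, …, m. -/

import Mathlib

open scoped Matrix Matrix.Norms.L2Operator

namespace TraceResolventAux

/-- Scalar estimate: for `z ≠ 0`, `a ≥ 0`, `r` real,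
`(Re z / |z|) * a ≤ |a - i z r|`. -/
lemma scalar_bound (z : ℂ) (hz : z ≠ 0) (a r : ℝ) (ha : 0 ≤ a) :
    (z.re / ‖z‖) * a ≤ ‖(a : ℂ) - Complex.I * z * r‖ := by
  have hz' : 0 < ‖z‖ := norm_pos_iff.mpr hz
  rw [div_mul_eq_mul_div, div_le_iff₀ hz']
  have key : z.re * a = ((starRingEnd ℂ) z * ((a : ℂ) - Complex.I * z * r)).re := by
    simp only [Complex.mul_re, Complex.sub_re, Complex.sub_im, Complex.mul_im,
      Complex.conj_re, Complex.conj_im, Complex.I_re, Complex.I_im,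
      Complex.ofReal_re, Complex.ofReal_im]
    ring
  calc z.re * a = ((starRingEnd ℂ) z * ((a : ℂ) - Complex.I * z * r)).re := key
    _ ≤ ‖(starRingEnd ℂ) z * ((a : ℂ) - Complex.I * z * r)‖ :=
        Complex.re_le_norm _
    _ = ‖(a : ℂ) - Complex.I * z * r‖ * ‖z‖ := by
        rw [norm_mul, Complex.norm_conj]; ring

lemma cos_arg_half_pos (lam : ℂ) (hlam0 : lam ≠ 0)
    (hlamneg : ¬ (lam.re < 0 ∧ lam.im = 0)) :
    0 < Real.cos (lam.arg / 2) := by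
  apply Real.cos_pos_of_mem_Ioo
  constructor
  · have := Complex.neg_pi_lt_arg lam; linarith
  · have h1 := Complex.arg_le_pi lam
    have h2 : lam.arg ≠ Real.pi := fun h => hlamneg (Complex.arg_eq_pi_iff.mp h)
    have := lt_of_le_of_ne h1 h2
    linarith

lemma sqrt_re_div_abs (N : ℕ) (hN : 1 ≤ N) (lam : ℂ) (hlam0 : lam ≠ 0) :
    ((lam / (N : ℂ)) ^ ((1 : ℂ)/2)).re / ‖(lam / (N : ℂ)) ^ ((1 : ℂ)/2)‖
      = Real.cos (lam.arg / 2) := by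
  have hNpos : (0 : ℝ) < N := by exact_mod_cast hN
  have hNne : (N : ℂ) ≠ 0 := by exact_mod_cast hNpos.ne'
  have hz : lam / (N : ℂ) ≠ 0 := div_ne_zero hlam0 hNne
  have harg : (lam / (N : ℂ)).arg = lam.arg := by
    have h : lam / (N : ℂ) = (((N : ℝ)⁻¹ : ℝ) : ℂ) * lam := by
      push_cast; field_simp
    rw [h, Complex.arg_real_mul _ (by positivity)]
  rw [Complex.cpow_def_of_ne_zero hz, Complex.exp_re, Complex.norm_exp,
    mul_comm, mul_div_assoc, div_self (Real.exp_ne_zero _), mul_one]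
  congr 1
  have : (Complex.log (lam / (N : ℂ)) * ((1 : ℂ)/2)).im = (lam / (N : ℂ)).arg / 2 := by
    simp [Complex.mul_im, Complex.log_im]
    ring
  rw [this, harg]

lemma sqrt_ne_zero (N : ℕ) (hN : 1 ≤ N) (lam : ℂ) (hlam0 : lam ≠ 0) :
    (lam / (N : ℂ)) ^ ((1 : ℂ)/2) ≠ 0 := by
  have hNpos : (0 : ℝ) < N := by exact_mod_cast hN
  have hNne : (N : ℂ) ≠ 0 := by exact_mod_cast hNpos.ne'
  simp only [ne_eq, Complex.cpow_eq_zero_iff, not_and_or, not_not]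
  left
  exact div_ne_zero hlam0 hNne

lemma toEuclideanLin_norm_le (N : ℕ) (M : Matrix (Fin N) (Fin N) ℂ)
    (x : EuclideanSpace ℂ (Fin N)) :
    ‖Matrix.toEuclideanLin M x‖ ≤ ‖M‖ * ‖x‖ := by
  rw [Matrix.l2_opNorm_def]
  exact ((Matrix.toEuclideanLin.trans LinearMap.toContinuousLinearMap) M).le_opNorm x

/-- `|Tr M| ≤ N‖M‖` for the ℓ²→ℓ² operator norm. -/
lemma abs_trace_le (N : ℕ) (M : Matrix (Fin N) (Fin N) ℂ) :
    ‖M.trace‖ ≤ (N : ℝ) * ‖M‖ := by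
  classical
  have entry : ∀ i : Fin N, ‖M i i‖ ≤ ‖M‖ := by
    intro i
    have h1 : M i i
        = inner ℂ (EuclideanSpace.single i (1 : ℂ))
            (Matrix.toEuclideanLin M (EuclideanSpace.single i (1 : ℂ))) := by
      rw [EuclideanSpace.inner_single_left]
      simp only [map_one, one_mul]
      have : (Matrix.toEuclideanLin M (EuclideanSpace.single i (1 : ℂ))) i
          = (M *ᵥ (Pi.single i (1 : ℂ))) i := rfl
      rw [this, Matrix.mulVec_single]
      simp
    have h2 : ‖M i i‖
        ≤ ‖EuclideanSpace.single i (1 : ℂ)‖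
          * ‖Matrix.toEuclideanLin M (EuclideanSpace.single i (1 : ℂ))‖ := by
      rw [h1]
      exact norm_inner_le_norm _ _
    have h3 : ‖EuclideanSpace.single i (1 : ℂ)‖ = 1 := by
      rw [EuclideanSpace.norm_single]; simp
    have h4 := toEuclideanLin_norm_le N M (EuclideanSpace.single i (1 : ℂ))
    rw [h3, one_mul] at h2
    rw [h3, mul_one] at h4
    exact h2.trans h4
  calc ‖M.trace‖ ≤ ∑ i, ‖M i i‖ := by
        simpa [Matrix.trace, Matrix.diag] using
          norm_sum_le (Finset.univ : Finset (Fin N)) (fun i => M i i)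
    _ ≤ ∑ _i : Fin N, ‖M‖ := Finset.sum_le_sum fun i _ => entry i
    _ = (N : ℝ) * ‖M‖ := by simp [Finset.sum_const, nsmul_eq_mul]

/-- Lower bound for the resolvent operator applied to a vector. -/
lemma resolvent_vec_lower (N : ℕ) (c : ℂ) (hc : c ≠ 0)
    (A : Matrix (Fin N) (Fin N) ℂ) (hA : A.IsHermitian)
    (x : EuclideanSpace ℂ (Fin N)) :
    (c.re / ‖c‖) * ‖x‖
      ≤ ‖Matrix.toEuclideanLin ((1 : Matrix (Fin N) (Fin N) ℂ) - (Complex.I * c) • A) x‖ := by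
  set κ := c.re / ‖c‖ with hκdef
  set B := (1 : Matrix (Fin N) (Fin N) ℂ) - (Complex.I * c) • A with hB
  by_cases hx : x = 0
  · simp [hx]
  have hxpos : 0 < ‖x‖ := norm_pos_iff.mpr hx
  have hsym := Matrix.isHermitian_iff_isSymmetric.mp hA
  set T := Matrix.toEuclideanLin A with hT
  obtain ⟨r, hr⟩ : ∃ r : ℝ, (inner ℂ x (T x) : ℂ) = (r : ℂ) := by
    refine ⟨(inner ℂ x (T x) : ℂ).re, ?_⟩
    have h1 : (starRingEnd ℂ) (inner ℂ x (T x) : ℂ) = (inner ℂ x (T x) : ℂ) := by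
      rw [inner_conj_symm]
      exact hsym x x
    exact (Complex.conj_eq_iff_re.mp h1).symm
  have happ : Matrix.toEuclideanLin B x = x - (Complex.I * c) • T x := by
    have h0 : Matrix.toEuclideanLin B = LinearMap.id - (Complex.I * c) • T := by
      rw [hB, map_sub, map_smul, Matrix.toEuclideanLin_eq_toLin, Matrix.toLin_one, hT]
      rfl
    rw [h0, LinearMap.sub_apply, LinearMap.smul_apply, LinearMap.id_apply]
  have hBx : (inner ℂ x (Matrix.toEuclideanLin B x) : ℂ)
      = ((‖x‖ ^ 2 : ℝ) : ℂ) - Complex.I * c * r := by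
    rw [happ, inner_sub_right, inner_smul_right, hr, inner_self_eq_norm_sq_to_K]
    norm_cast
  have h1 : κ * ‖x‖ ^ 2 ≤ ‖(inner ℂ x (Matrix.toEuclideanLin B x) : ℂ)‖ := by
    rw [hBx]
    exact scalar_bound c hc (‖x‖ ^ 2) r (by positivity)
  have h2 : ‖(inner ℂ x (Matrix.toEuclideanLin B x) : ℂ)‖
      ≤ ‖x‖ * ‖Matrix.toEuclideanLin B x‖ := by
    exact norm_inner_le_norm _ _
  nlinarith [h1.trans h2]

/-- The resolvent matrix is invertible. -/
lemma resolvent_isUnit_det (N : ℕ) (c : ℂ) (hc : c ≠ 0) (hcre : 0 < c.re)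
    (A : Matrix (Fin N) (Fin N) ℂ) (hA : A.IsHermitian) :
    IsUnit ((1 : Matrix (Fin N) (Fin N) ℂ) - (Complex.I * c) • A).det := by
  set B := (1 : Matrix (Fin N) (Fin N) ℂ) - (Complex.I * c) • A with hB
  rw [isUnit_iff_ne_zero]
  intro hdet
  obtain ⟨v, hv, hv0⟩ := Matrix.exists_mulVec_eq_zero_iff.mpr hdet
  set x : EuclideanSpace ℂ (Fin N) := (WithLp.equiv 2 (Fin N → ℂ)).symm v with hxdef
  have hx : x ≠ 0 := by
    simp only [hxdef, ne_eq, EmbeddingLike.map_eq_zero_iff]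
    simpa using hv
  have hxpos : 0 < ‖x‖ := norm_pos_iff.mpr hx
  have hκ : 0 < c.re / ‖c‖ := div_pos hcre (norm_pos_iff.mpr hc)
  have h := resolvent_vec_lower N c hc A hA x
  have hBx : Matrix.toEuclideanLin B x = 0 := by
    rw [hxdef, WithLp.equiv_symm_apply, Matrix.toEuclideanLin_apply_piLp_toLp, hv0]
    simp
  rw [hBx] at h
  simp only [norm_zero] at h
  nlinarith

/-- Norm bound for the inverse of the resolvent. -/
lemma resolvent_inv_norm_le (N : ℕ) (c : ℂ) (hc : c ≠ 0) (hcre : 0 < c.re)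
    (A : Matrix (Fin N) (Fin N) ℂ) (hA : A.IsHermitian) :
    ‖((1 : Matrix (Fin N) (Fin N) ℂ) - (Complex.I * c) • A)⁻¹‖
      ≤ (c.re / ‖c‖)⁻¹ := by
  set κ := c.re / ‖c‖ with hκdef
  have hκ : 0 < κ := div_pos hcre (norm_pos_iff.mpr hc)
  set B := (1 : Matrix (Fin N) (Fin N) ℂ) - (Complex.I * c) • A with hB
  have hdet := resolvent_isUnit_det N c hc hcre A hA
  rw [Matrix.l2_opNorm_def]
  apply ContinuousLinearMap.opNorm_le_bound _ (by positivity)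
  intro x
  set y := Matrix.toEuclideanLin B⁻¹ x with hy
  have hcomp : Matrix.toEuclideanLin (B * B⁻¹)
      = (Matrix.toEuclideanLin B).comp (Matrix.toEuclideanLin B⁻¹) := by
    rw [Matrix.toEuclideanLin_eq_toLin, Matrix.toLin_mul _ (PiLp.basisFun 2 ℂ (Fin N)) _]
  have hBy : Matrix.toEuclideanLin B y = x := by
    have h1 : Matrix.toEuclideanLin (B * B⁻¹) x = x := by
      rw [Matrix.mul_nonsing_inv B hdet]
      rw [Matrix.toEuclideanLin_eq_toLin, Matrix.toLin_one, LinearMap.id_apply]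
    rw [hcomp] at h1
    exact h1
  have h := resolvent_vec_lower N c hc A hA y
  rw [hBy] at h
  have hyx : ‖y‖ ≤ κ⁻¹ * ‖x‖ := by
    rw [inv_mul_eq_div, le_div_iff₀ hκ]
    linarith
  exact hyx

end TraceResolventAux

/-- **Bound on a trace of products of resolvents and sources** (eq. `treeamplitudebound`).
For `λ` nonzero, not a negative real, with `θ = arg λ ∈ (−π, π)`, `J` an `N × N` complex
matrix, `A₁, …, A_m` Hermitian `N × N` matrices and `η₁, …, η_m ∈ {0,1}` with
`k = η₁ + ⋯ + η_m`, one has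
`|Tr[∏_j (1 - i √(λ/N) A_j)⁻¹ (J J†)^{η_j}]| ≤ N ‖J J†‖^k / cos(θ/2)^m`,
the product being the ordered matrix product over `j = 1, …, m`, `‖·‖` the ℓ² → ℓ²
operator norm, and `√` the principal branch of the complex square root. -/
theorem trace_resolvent_product_bound (N : ℕ) (hN : 1 ≤ N)
    (lam : ℂ) (hlam0 : lam ≠ 0) (hlamneg : ¬ (lam.re < 0 ∧ lam.im = 0))
    (J : Matrix (Fin N) (Fin N) ℂ)
    (m : ℕ) (hm : 1 ≤ m)
    (A : Fin m → Matrix (Fin N) (Fin N) ℂ) (hA : ∀ j, (A j).IsHermitian)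
    (η : Fin m → ℕ) (hη : ∀ j, η j ≤ 1) (k : ℕ) (hk : k = ∑ j, η j) :
    ‖(Matrix.trace
        (List.prod
          (List.ofFn fun j : Fin m =>
            ((1 : Matrix (Fin N) (Fin N) ℂ)
                - (Complex.I * (lam / (N : ℂ)) ^ ((1 : ℂ)/2)) • A j)⁻¹
              * (J * Jᴴ) ^ (η j))))‖
      ≤ (N : ℝ) * ‖J * Jᴴ‖ ^ k / Real.cos (Complex.arg lam / 2) ^ m := by
  have hNpos : (0 : ℝ) < N := by exact_mod_cast hN
  set c : ℂ := (lam / (N : ℂ)) ^ ((1 : ℂ)/2) with hc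
  have hcne : c ≠ 0 := TraceResolventAux.sqrt_ne_zero N hN lam hlam0
  have hcos : c.re / ‖c‖ = Real.cos (lam.arg / 2) :=
    TraceResolventAux.sqrt_re_div_abs N hN lam hlam0
  set κ : ℝ := Real.cos (lam.arg / 2) with hκ
  have hκpos : 0 < κ := TraceResolventAux.cos_arg_half_pos lam hlam0 hlamneg
  have habs : 0 < ‖c‖ := norm_pos_iff.mpr hcne
  have hcre : 0 < c.re := by
    have hdiv : 0 < c.re / ‖c‖ := by rw [hcos]; exact hκpos
    rcases div_pos_iff.mp hdiv with ⟨h, _⟩ | ⟨_, h⟩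
    · exact h
    · linarith
  set f : Fin m → Matrix (Fin N) (Fin N) ℂ := fun j =>
    ((1 : Matrix (Fin N) (Fin N) ℂ) - (Complex.I * c) • A j)⁻¹ * (J * Jᴴ) ^ (η j) with hf
  have hfj : ∀ j, ‖f j‖ ≤ ‖J * Jᴴ‖ ^ (η j) * κ⁻¹ := by
    intro j
    have hinv := TraceResolventAux.resolvent_inv_norm_le N c hcne hcre (A j) (hA j)
    rw [hcos] at hinv
    rcases Nat.le_one_iff_eq_zero_or_eq_one.mp (hη j) with h | h
    · rw [hf]
      simp only [h, pow_zero, mul_one, one_mul]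
      exact hinv
    · rw [hf]
      simp only [h, pow_one]
      calc ‖((1 : Matrix (Fin N) (Fin N) ℂ) - (Complex.I * c) • A j)⁻¹ * (J * Jᴴ)‖
          ≤ ‖((1 : Matrix (Fin N) (Fin N) ℂ) - (Complex.I * c) • A j)⁻¹‖ * ‖J * Jᴴ‖ :=
            norm_mul_le _ _
        _ ≤ κ⁻¹ * ‖J * Jᴴ‖ :=
            mul_le_mul_of_nonneg_right hinv (norm_nonneg _)
        _ = ‖J * Jᴴ‖ * κ⁻¹ := mul_comm _ _
  have hnil : List.ofFn f ≠ [] := by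
    apply List.ne_nil_of_length_pos
    rw [List.length_ofFn]
    omega
  have hprod : ‖(List.ofFn f).prod‖ ≤ ‖J * Jᴴ‖ ^ k * (κ⁻¹) ^ m := by
    calc ‖(List.ofFn f).prod‖ ≤ ((List.ofFn f).map norm).prod := List.norm_prod_le' hnil
      _ = ∏ j, ‖f j‖ := by rw [List.map_ofFn, List.prod_ofFn]; rfl
      _ ≤ ∏ j, (‖J * Jᴴ‖ ^ (η j) * κ⁻¹) :=
          Finset.prod_le_prod (fun j _ => norm_nonneg _) (fun j _ => hfj j)
      _ = (∏ j, ‖J * Jᴴ‖ ^ (η j)) * ∏ _j : Fin m, κ⁻¹ := Finset.prod_mul_distrib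
      _ = ‖J * Jᴴ‖ ^ k * (κ⁻¹) ^ m := by
          rw [Finset.prod_pow_eq_pow_sum, Finset.prod_const, hk]
          simp
  calc ‖Matrix.trace (List.ofFn f).prod‖
      ≤ (N : ℝ) * ‖(List.ofFn f).prod‖ := TraceResolventAux.abs_trace_le N _
    _ ≤ (N : ℝ) * (‖J * Jᴴ‖ ^ k * (κ⁻¹) ^ m) :=
        mul_le_mul_of_nonneg_left hprod (le_of_lt hNpos)
    _ = (N : ℝ) * ‖J * Jᴴ‖ ^ k / κ ^ m := by
        rw [div_eq_mul_inv, ← inv_pow]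
        ring
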